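/- Let n ≥ 1, m ≥ 1, K ≥ 0, and let H be a function from the hyperplane {z ∈ ℝ^{n+1} : S(z) = 0} to [−1,1]^m satisfying ∥H(z) − H(w)∥_∞ ≤ K·∥z − w∥_∞ for all z, w in the hyperplane and H(−z) = −H(z). Let C ≥ 1 + (n+1)·K and define F' : [−1,1]^{n+1} → ℝ^m by F'(x) = (1 − |S(x)|/(n+1))·H(Π(x)) + C·(S(x)/(n+1))·𝟙_m, where 𝟙_m ∈ ℝ^m is the all-ones vector. Then: (i) F'(−x) = −F'(x) for all x ∈ [−1,1]^{n+1}; (ii) F' is monotone, i.e., F'(x) ≤ F'(y) coordinatewise whenever x, y ∈ [−1,1]^{n+1} satisfy x ≤ y coordinatewise; and (iii) ∥F'(x) − F'(y)∥_∞ ≤ (1 + √(n+1)·K + C)·∥x − y∥_∞ for all x, y ∈ [−1,1]^{n+1}. -/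

import Mathlib

open Set

/-- `S(x) = Σ_i x_i`. -/
noncomputable def Ssum (n : ℕ) (x : Fin (n + 1) → ℝ) : ℝ := ∑ i, x i

/-- The orthogonal projection `Π(x) = x − (S(x)/(n+1))·𝟙` onto the hyperplane `{S = 0}`. -/
noncomputable def projD (n : ℕ) (x : Fin (n + 1) → ℝ) : Fin (n + 1) → ℝ :=
  fun i => x i - Ssum n x / ((n : ℝ) + 1)

lemma mono_alg (N K C s t u v a b : ℝ) (hN : 0 < N) (hK : 0 ≤ K) (hC : 1 + N*K ≤ C)
    (hst : s ≤ t) (ha0 : 0 ≤ a) (hb0 : 0 ≤ b) (haN : a ≤ N) (hbN : b ≤ N)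
    (hu1 : -1 ≤ u) (hu2 : u ≤ 1) (hab1 : a - b ≤ t - s) (hab2 : b - a ≤ t - s)
    (hvu1 : -(K*(t-s)) ≤ v - u) :
    (1 - a/N)*u + C*(s/N) ≤ (1 - b/N)*v + C*(t/N) := by
  have key : (N - a) * u + C * s ≤ (N - b) * v + C * t := by
    have h1 : 0 ≤ (N - b) * (v - u + K*(t-s)) :=
      mul_nonneg (by linarith) (by linarith)
    have h2 : 0 ≤ b * (K * (t-s)) := mul_nonneg hb0 (mul_nonneg hK (by linarith))
    have h3 : 0 ≤ ((t-s) + (a - b)) * (1 + u) := mul_nonneg (by linarith) (by linarith)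
    have h4 : 0 ≤ ((t-s) - (a - b)) * (1 - u) := mul_nonneg (by linarith) (by linarith)
    nlinarith
  have e1 : (1 - a/N)*u + C*(s/N) = ((N - a)*u + C*s)/N := by field_simp
  have e2 : (1 - b/N)*v + C*(t/N) = ((N - b)*v + C*t)/N := by field_simp
  rw [e1, e2]
  exact div_le_div_of_nonneg_right key hN.le

lemma lip_alg (N K C R s t u v a b e : ℝ) (hN : 0 < N) (hK : 0 ≤ K) (hC : 1 ≤ C)
    (hR : 0 ≤ R) (he : 0 ≤ e)
    (ha0 : 0 ≤ a) (haN : a ≤ N) (hu1 : |u| ≤ 1) (hv1 : |v| ≤ 1)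
    (hab : |a - b| ≤ N*e) (hst : |s - t| ≤ N*e) (huv : |u - v| ≤ K*(R*e)) :
    |(1 - a/N)*u + C*(s/N) - ((1 - b/N)*v + C*(t/N))| ≤ (1 + R*K + C)*e := by
  have hC0 : (0:ℝ) ≤ C := by linarith
  have e1 : (1 - a/N)*u + C*(s/N) - ((1 - b/N)*v + C*(t/N))
      = ((N - a)*(u - v) + ((b - a)*v + C*(s - t)))/N := by field_simp; ring
  rw [e1, abs_div, abs_of_pos hN, div_le_iff₀ hN]
  have h1 : |(N - a)*(u - v)| ≤ N*(K*(R*e)) := by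
    rw [abs_mul, abs_of_nonneg (by linarith : (0:ℝ) ≤ N - a)]
    exact mul_le_mul (by linarith) huv (abs_nonneg _) hN.le
  have h2 : |(b - a)*v| ≤ N*e := by
    rw [abs_mul]
    calc |b - a| * |v| ≤ (N*e) * 1 := by
          apply mul_le_mul _ hv1 (abs_nonneg _) (by positivity)
          rw [abs_sub_comm] at hab
          exact hab
      _ = N*e := by ring
  have h3 : |C*(s - t)| ≤ C*(N*e) := by
    rw [abs_mul, abs_of_nonneg hC0]
    exact mul_le_mul_of_nonneg_left hst hC0
  have htri : |(N - a)*(u - v) + ((b - a)*v + C*(s - t))|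
      ≤ |(N - a)*(u - v)| + (|(b - a)*v| + |C*(s - t)|) :=
    (abs_add_le _ _).trans (by gcongr; exact abs_add_le _ _)
  nlinarith [htri, h1, h2, h3]

lemma Ssum_projD (n : ℕ) (x : Fin (n+1) → ℝ) : Ssum n (projD n x) = 0 := by
  have hN : ((n:ℝ)+1) ≠ 0 := by positivity
  simp [Ssum, projD, Finset.sum_sub_distrib, Finset.sum_const, Finset.card_univ]
  field_simp
  ring

lemma projD_neg (n : ℕ) (x : Fin (n+1) → ℝ) : projD n (-x) = -(projD n x) := by
  funext i
  simp [projD, Ssum]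
  ring

lemma Ssum_neg (n : ℕ) (x : Fin (n+1) → ℝ) : Ssum n (-x) = -(Ssum n x) := by
  simp [Ssum]

lemma abs_Ssum_le (n : ℕ) (x : Fin (n+1) → ℝ) (hx : ∀ i, x i ∈ Icc (-1:ℝ) 1) :
    |Ssum n x| ≤ (n:ℝ) + 1 := by
  calc |Ssum n x| ≤ ∑ i, |x i| := Finset.abs_sum_le_sum_abs _ _
    _ ≤ ∑ _i : Fin (n+1), (1:ℝ) := by
        apply Finset.sum_le_sum
        intro i _
        exact abs_le.2 ⟨(hx i).1, (hx i).2⟩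
    _ = (n:ℝ) + 1 := by simp

lemma abs_Ssum_sub_le (n : ℕ) (x y : Fin (n+1) → ℝ) :
    |Ssum n x - Ssum n y| ≤ ((n:ℝ)+1) * ‖x - y‖ := by
  have h : Ssum n x - Ssum n y = ∑ i, (x - y) i := by
    simp [Ssum, Finset.sum_sub_distrib]
  rw [h]
  calc |∑ i, (x-y) i| ≤ ∑ i, |(x-y) i| := Finset.abs_sum_le_sum_abs _ _
    _ ≤ ∑ _i : Fin (n+1), ‖x - y‖ := by
        apply Finset.sum_le_sum
        intro i _
        simpa [Real.norm_eq_abs] using norm_le_pi_norm (x-y) i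
    _ = ((n:ℝ)+1) * ‖x - y‖ := by simp [Finset.sum_const, Finset.card_univ]

lemma projD_sub_norm (n : ℕ) (hn : 1 ≤ n) (x y : Fin (n+1) → ℝ) :
    ‖projD n x - projD n y‖ ≤ Real.sqrt ((n:ℝ)+1) * ‖x - y‖ := by
  have hnr : (1:ℝ) ≤ (n:ℝ) := by exact_mod_cast hn
  have he : (0:ℝ) ≤ ‖x - y‖ := norm_nonneg _
  have hsq : 2*(n:ℝ)/((n:ℝ)+1) ≤ Real.sqrt ((n:ℝ)+1) := by
    rw [Real.le_sqrt (by positivity) (by positivity), div_pow, div_le_iff₀ (by positivity)]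
    nlinarith [sq_nonneg ((n:ℝ)-1)]
  have hR : (0:ℝ) ≤ Real.sqrt ((n:ℝ)+1) * ‖x - y‖ := by positivity
  rw [pi_norm_le_iff_of_nonneg hR]
  intro i
  have hcoord : ∀ k, |(x-y) k| ≤ ‖x - y‖ := fun k => by
    simpa [Real.norm_eq_abs] using norm_le_pi_norm (x-y) k
  have hrest : |(Ssum n x - Ssum n y) - (x-y) i| ≤ (n:ℝ) * ‖x - y‖ := by
    have h : (Ssum n x - Ssum n y) - (x-y) i = ∑ k ∈ Finset.univ.erase i, (x-y) k := by
      have h0 : Ssum n x - Ssum n y = ∑ k, (x - y) k := by simp [Ssum, Finset.sum_sub_distrib]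
      rw [h0, ← Finset.sum_erase_add Finset.univ _ (Finset.mem_univ i)]
      ring
    rw [h]
    calc |∑ k ∈ Finset.univ.erase i, (x-y) k| ≤ ∑ k ∈ Finset.univ.erase i, |(x-y) k| :=
          Finset.abs_sum_le_sum_abs _ _
      _ ≤ ∑ _k ∈ Finset.univ.erase i, ‖x - y‖ :=
          Finset.sum_le_sum fun k _ => hcoord k
      _ = (n:ℝ) * ‖x - y‖ := by
          rw [Finset.sum_const, Finset.card_erase_of_mem (Finset.mem_univ i)]
          simp
  have hval : (projD n x - projD n y) i =
      ((n:ℝ) * (x-y) i - ((Ssum n x - Ssum n y) - (x-y) i)) / ((n:ℝ)+1) := by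
    simp only [Pi.sub_apply, projD]
    field_simp
    ring
  rw [Real.norm_eq_abs, hval, abs_div, abs_of_pos (show (0:ℝ) < (n:ℝ)+1 by positivity),
    div_le_iff₀ (show (0:ℝ) < (n:ℝ)+1 by positivity)]
  have h1 : |(n:ℝ) * (x-y) i - ((Ssum n x - Ssum n y) - (x-y) i)|
      ≤ (n:ℝ)*‖x-y‖ + (n:ℝ)*‖x-y‖ := by
    calc |(n:ℝ) * (x-y) i - ((Ssum n x - Ssum n y) - (x-y) i)|
        ≤ |(n:ℝ) * (x-y) i| + |(Ssum n x - Ssum n y) - (x-y) i| := abs_sub _ _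
      _ ≤ (n:ℝ)*‖x-y‖ + (n:ℝ)*‖x-y‖ := by
          have := hcoord i
          rw [abs_mul, abs_of_nonneg (show (0:ℝ) ≤ (n:ℝ) by positivity)]
          have h2 : (n:ℝ) * |(x-y) i| ≤ (n:ℝ) * ‖x-y‖ :=
            mul_le_mul_of_nonneg_left this (by positivity)
          linarith [hrest]
  calc |(n:ℝ) * (x-y) i - ((Ssum n x - Ssum n y) - (x-y) i)|
      ≤ 2*(n:ℝ)*‖x-y‖ := by linarith
    _ ≤ Real.sqrt ((n:ℝ)+1) * ‖x-y‖ * ((n:ℝ)+1) := by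
        have := mul_le_mul_of_nonneg_right hsq he
        rw [div_mul_eq_mul_div, div_le_iff₀ (show (0:ℝ) < (n:ℝ)+1 by positivity)] at this
        nlinarith [Real.sqrt_nonneg ((n:ℝ)+1)]

/-- Monotone extension lemma: if `H` on the hyperplane `{S = 0}` takes values in `[−1,1]^m`,
is `K`-Lipschitz (sup norms) and odd, and `C ≥ 1 + (n+1)·K`, then
`F'(x) = (1 − |S(x)|/(n+1))·H(Π(x)) + C·(S(x)/(n+1))·𝟙_m` satisfies:
(i) `F'(−x) = −F'(x)`; (ii) `F'` is monotone on `[−1,1]^{n+1}`;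
(iii) `F'` is `(1 + √(n+1)·K + C)`-Lipschitz on `[−1,1]^{n+1}`. -/
theorem stmt13 (n m : ℕ) (hn : 1 ≤ n) (hm : 1 ≤ m) (K C : ℝ) (hK : 0 ≤ K)
    (hC : 1 + ((n : ℝ) + 1) * K ≤ C)
    (H : (Fin (n + 1) → ℝ) → Fin m → ℝ)
    (hHmap : ∀ z : Fin (n + 1) → ℝ, Ssum n z = 0 → ∀ j, H z j ∈ Icc (-1:ℝ) 1)
    (hHlip : ∀ z w : Fin (n + 1) → ℝ, Ssum n z = 0 → Ssum n w = 0 →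
      ‖H z - H w‖ ≤ K * ‖z - w‖)
    (hHodd : ∀ z : Fin (n + 1) → ℝ, Ssum n z = 0 → H (-z) = -(H z))
    (F' : (Fin (n + 1) → ℝ) → Fin m → ℝ)
    (hF' : ∀ x, F' x = fun j : Fin m =>
      (1 - |Ssum n x| / ((n : ℝ) + 1)) * H (projD n x) j + C * (Ssum n x / ((n : ℝ) + 1))) :
    (∀ x : Fin (n + 1) → ℝ, (∀ i, x i ∈ Icc (-1:ℝ) 1) → F' (-x) = -(F' x)) ∧
    (∀ x y : Fin (n + 1) → ℝ, (∀ i, x i ∈ Icc (-1:ℝ) 1) → (∀ i, y i ∈ Icc (-1:ℝ) 1) →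
      (∀ i, x i ≤ y i) → ∀ j, F' x j ≤ F' y j) ∧
    (∀ x y : Fin (n + 1) → ℝ, (∀ i, x i ∈ Icc (-1:ℝ) 1) → (∀ i, y i ∈ Icc (-1:ℝ) 1) →
      ‖F' x - F' y‖ ≤ (1 + Real.sqrt ((n : ℝ) + 1) * K + C) * ‖x - y‖) := by
  have hNpos : (0:ℝ) < (n:ℝ) + 1 := by positivity
  have hC1 : (1:ℝ) ≤ C := by nlinarith
  refine ⟨?_, ?_, ?_⟩
  · -- (i) odd
    intro x _
    funext j
    simp only [hF', Ssum_neg, projD_neg, hHodd (projD n x) (Ssum_projD n x), abs_neg,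
      Pi.neg_apply]
    ring
  · -- (ii) monotone
    intro x y hx hy hxy j
    simp only [hF']
    have hst : Ssum n x ≤ Ssum n y := Finset.sum_le_sum (fun i _ => hxy i)
    have hT : 0 ≤ Ssum n y - Ssum n x := by linarith
    have hux := hHmap _ (Ssum_projD n x) j
    have hproj : ‖projD n y - projD n x‖ ≤ Ssum n y - Ssum n x := by
      rw [pi_norm_le_iff_of_nonneg hT]
      intro i
      have hei : 0 ≤ y i - x i := sub_nonneg.mpr (hxy i)
      have heisum : y i - x i ≤ Ssum n y - Ssum n x := by
        have h : Ssum n y - Ssum n x = ∑ k, (y k - x k) := by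
          simp [Ssum, Finset.sum_sub_distrib]
        rw [h]
        exact Finset.single_le_sum (f := fun k => y k - x k)
          (fun k _ => sub_nonneg.mpr (hxy k)) (Finset.mem_univ i)
      have hval : (projD n y - projD n x) i
          = (y i - x i) - (Ssum n y - Ssum n x)/((n:ℝ)+1) := by
        simp only [Pi.sub_apply, projD]
        ring
      rw [Real.norm_eq_abs, hval, abs_le]
      have hdivpos : 0 ≤ (Ssum n y - Ssum n x)/((n:ℝ)+1) := by positivity
      have hdivle : (Ssum n y - Ssum n x)/((n:ℝ)+1) ≤ Ssum n y - Ssum n x := by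
        rw [div_le_iff₀ hNpos]; nlinarith
      constructor <;> linarith
    have hvu : |H (projD n y) j - H (projD n x) j| ≤ K * (Ssum n y - Ssum n x) := by
      have h := hHlip (projD n y) (projD n x) (Ssum_projD n y) (Ssum_projD n x)
      have h2 : |H (projD n y) j - H (projD n x) j| ≤ ‖H (projD n y) - H (projD n x)‖ := by
        simpa [Real.norm_eq_abs] using norm_le_pi_norm (H (projD n y) - H (projD n x)) j
      calc |H (projD n y) j - H (projD n x) j| ≤ K * ‖projD n y - projD n x‖ := le_trans h2 h
        _ ≤ K * (Ssum n y - Ssum n x) := mul_le_mul_of_nonneg_left hproj hK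
    have habs1 := abs_sub_abs_le_abs_sub (Ssum n x) (Ssum n y)
    have habs2 := abs_sub_abs_le_abs_sub (Ssum n y) (Ssum n x)
    rw [abs_sub_comm, abs_of_nonneg hT] at habs1
    rw [abs_of_nonneg hT] at habs2
    exact mono_alg ((n:ℝ)+1) K C (Ssum n x) (Ssum n y)
      (H (projD n x) j) (H (projD n y) j) |Ssum n x| |Ssum n y|
      hNpos hK hC hst (abs_nonneg _) (abs_nonneg _)
      (abs_Ssum_le n x hx) (abs_Ssum_le n y hy)
      hux.1 hux.2 (by linarith) (by linarith) (by linarith [abs_le.1 hvu])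
  · -- (iii) Lipschitz
    intro x y hx hy
    have hsqrt : (0:ℝ) ≤ Real.sqrt ((n:ℝ)+1) := Real.sqrt_nonneg _
    have hRnn : (0:ℝ) ≤ 1 + Real.sqrt ((n:ℝ)+1) * K + C := by nlinarith
    have he : (0:ℝ) ≤ ‖x - y‖ := norm_nonneg _
    rw [pi_norm_le_iff_of_nonneg (mul_nonneg hRnn he)]
    intro j
    have hux := hHmap _ (Ssum_projD n x) j
    have hvy := hHmap _ (Ssum_projD n y) j
    have huv : |H (projD n x) j - H (projD n y) j|
        ≤ K * (Real.sqrt ((n:ℝ)+1) * ‖x - y‖) := by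
      have h := hHlip (projD n x) (projD n y) (Ssum_projD n x) (Ssum_projD n y)
      have h2 : |H (projD n x) j - H (projD n y) j| ≤ ‖H (projD n x) - H (projD n y)‖ := by
        simpa [Real.norm_eq_abs] using norm_le_pi_norm (H (projD n x) - H (projD n y)) j
      calc |H (projD n x) j - H (projD n y) j| ≤ K * ‖projD n x - projD n y‖ := le_trans h2 h
        _ ≤ K * (Real.sqrt ((n:ℝ)+1) * ‖x - y‖) :=
            mul_le_mul_of_nonneg_left (projD_sub_norm n hn x y) hK
    have hab : |(|Ssum n x| - |Ssum n y|)| ≤ ((n:ℝ)+1) * ‖x - y‖ :=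
      le_trans (abs_abs_sub_abs_le_abs_sub _ _) (abs_Ssum_sub_le n x y)
    have hcomp : (F' x - F' y) j = (1 - |Ssum n x| / ((n : ℝ) + 1)) * H (projD n x) j
        + C * (Ssum n x / ((n : ℝ) + 1))
        - ((1 - |Ssum n y| / ((n : ℝ) + 1)) * H (projD n y) j
        + C * (Ssum n y / ((n : ℝ) + 1))) := by
      simp [hF']
    rw [Real.norm_eq_abs, hcomp, mul_comm (1 + Real.sqrt ((n:ℝ)+1) * K + C) ‖x - y‖]
    rw [show ‖x-y‖ * (1 + Real.sqrt ((n:ℝ)+1) * K + C)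
        = (1 + Real.sqrt ((n:ℝ)+1) * K + C) * ‖x-y‖ from mul_comm _ _]
    exact lip_alg ((n:ℝ)+1) K C (Real.sqrt ((n:ℝ)+1)) (Ssum n x) (Ssum n y)
      (H (projD n x) j) (H (projD n y) j) |Ssum n x| |Ssum n y| ‖x - y‖
      hNpos hK hC1 hsqrt he (abs_nonneg _) (abs_Ssum_le n x hx)
      (abs_le.2 ⟨hux.1, hux.2⟩) (abs_le.2 ⟨hvy.1, hvy.2⟩)
      hab (abs_Ssum_sub_le n x y) huv
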